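/- Let s be a Steinitz number. Then Spec(H(∞) ⊗ H(s)) = S(∞,s), where S(∞,s) = { (a/b)·s : a ∈ ℕ, b ∈ Ω(s) }. -/

import Mathlib

open scoped BigOperators

noncomputable section

/-! ### Steinitz numbers -/

/-- A Steinitz number: a formal product `∏ p ^ r_p` over all primes, with exponents
`r_p ∈ ℕ ∪ {∞}`, encoded as the function sending each prime to its exponent. -/
def SteinitzNumber : Type := Nat.Primes → ℕ∞

namespace SteinitzNumber

instance : One SteinitzNumber := ⟨fun _ => 0⟩

instance : Mul SteinitzNumber := ⟨fun s t p => s p + t p⟩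

/-- The Steinitz number associated with a positive integer `n`. -/
def ofNat (n : ℕ) : SteinitzNumber := fun p => (n.factorization p : ℕ∞)

/-- `b ∈ Ω(s)`: the positive integer `b` divides the Steinitz number `s`. -/
def NatDvd (b : ℕ) (s : SteinitzNumber) : Prop :=
  0 < b ∧ ∀ p : Nat.Primes, (b.factorization p : ℕ∞) ≤ s p

/-- The quotient `s / b` of a Steinitz number by a positive integer dividing it. -/
def divNat (s : SteinitzNumber) (b : ℕ) : SteinitzNumber :=
  fun p => s p - (b.factorization p : ℕ∞)

/-- An infinite Steinitz number is one which is not a positive integer. -/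
def Infinite (s : SteinitzNumber) : Prop := ∀ n : ℕ, s ≠ ofNat n

/-- Steinitz numbers `s` and `t` are rationally connected: `t = (a/b)·s` for positive
integers `a, b` (expressed by cross multiplication). -/
def RationallyConnected (s t : SteinitzNumber) : Prop :=
  ∃ a b : ℕ, 0 < a ∧ 0 < b ∧ ofNat b * t = ofNat a * s

/-- `s₁` finitely divides `s₂`: `s₁ = s₂ / b` for some `b ∈ Ω(s₂)`. -/
def FinDvd (s₁ s₂ : SteinitzNumber) : Prop :=
  ∃ b : ℕ, NatDvd b s₂ ∧ ofNat b * s₁ = s₂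

/-- `s₁ ≤ s₂` iff `s₁ = (a/b)·s₂` with `b ∈ Ω(s₂)` and `1 ≤ a ≤ b`. -/
def Le (s₁ s₂ : SteinitzNumber) : Prop :=
  ∃ a b : ℕ, 0 < a ∧ a ≤ b ∧ NatDvd b s₂ ∧ ofNat b * s₁ = ofNat a * s₂

/-- A saturated set of Steinitz numbers. -/
def Saturated (S : Set SteinitzNumber) : Prop :=
  (∀ s₁ ∈ S, ∀ s₂ ∈ S, RationallyConnected s₁ s₂) ∧
  (∀ s₂ ∈ S, ∀ s₁, FinDvd s₁ s₂ → s₁ ∈ S) ∧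
  (∀ s ∈ S, ∀ n : ℕ, ofNat n * s ∈ S → ∀ k : ℕ, 1 ≤ k → k ≤ n → ofNat k * s ∈ S)

/-- `S(∞, s) = { (a/b)·s : a ∈ ℕ, b ∈ Ω(s) }`. -/
def SInf (s : SteinitzNumber) : Set SteinitzNumber :=
  {t | ∃ a b : ℕ, 0 < a ∧ NatDvd b s ∧ ofNat b * t = ofNat a * s}

/-- `S(r, s) = { (a/b)·s : a, b ∈ ℕ, b ∈ Ω(s), a ≤ r·b }`. -/
def SBdd (r : ℝ) (s : SteinitzNumber) : Set SteinitzNumber :=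
  {t | ∃ a b : ℕ, 0 < a ∧ NatDvd b s ∧ (a : ℝ) ≤ r * b ∧ ofNat b * t = ofNat a * s}

/-- `S⁺(r, s) = { (a/b)·s : a, b ∈ ℕ, b ∈ Ω(s), a < r·b }`. -/
def SBddPlus (r : ℝ) (s : SteinitzNumber) : Set SteinitzNumber :=
  {t | ∃ a b : ℕ, 0 < a ∧ NatDvd b s ∧ (a : ℝ) < r * b ∧ ofNat b * t = ofNat a * s}

end SteinitzNumber

/-! ### Measure algebras -/

/-- A measure algebra: a Boolean algebra (an associative, commutative algebra over `𝔽₂`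
in which every element is idempotent) equipped with a measure `μ` which is positive on
nonzero elements and additive on orthogonal pairs. -/
structure MeasureAlgebra : Type 1 where
  carrier : Type
  [ring : NonUnitalCommRing carrier]
  idem : ∀ x : carrier, x * x = x
  mu : carrier → ℝ
  mu_nonneg : ∀ a, 0 ≤ mu a
  mu_eq_zero_iff : ∀ a, mu a = 0 ↔ a = 0
  mu_add : ∀ a b : carrier, a * b = 0 → mu (a + b) = mu a + mu b

attribute [instance] MeasureAlgebra.ring

namespace MeasureAlgebra

/-- Isomorphism of measure algebras: a Boolean algebra isomorphism preserving the measures. -/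
def Isomorphic (H₁ H₂ : MeasureAlgebra) : Prop :=
  ∃ φ : H₁.carrier ≃+* H₂.carrier, ∀ a, H₂.mu (φ a) = H₁.mu a

/-- Scalar equivalence of measure algebras: a Boolean algebra isomorphism multiplying
the measure by a positive constant `α`. -/
def ScalarEquivalent (H₁ H₂ : MeasureAlgebra) : Prop :=
  ∃ α : ℝ, 0 < α ∧ ∃ φ : H₁.carrier ≃+* H₂.carrier, ∀ a, H₂.mu (φ a) = α * H₁.mu a

/-- The measure subalgebra of a measure algebra supported on a subring, with the
restricted measure. -/
def restrict (H : MeasureAlgebra) (S : NonUnitalSubring H.carrier) : MeasureAlgebra where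
  carrier := S
  idem := fun x => Subtype.ext (H.idem x.1)
  mu := fun x => H.mu x.1
  mu_nonneg := fun a => H.mu_nonneg a.1
  mu_eq_zero_iff := fun a => by
    rw [H.mu_eq_zero_iff a.1]
    exact ⟨fun h => Subtype.ext h, fun h => congrArg Subtype.val h⟩
  mu_add := fun a b hab => H.mu_add a.1 b.1 (congrArg Subtype.val hab)

/-- The standard measure algebra `Stₙ = 𝔽₂ⁿ` with `μ(x₁, …, xₙ) = (x₁ + ⋯ + xₙ)/n`. -/
def St (n : ℕ) : MeasureAlgebra where
  carrier := Fin n → ZMod 2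
  idem := fun x => funext fun i => by
    have h : ∀ a : ZMod 2, a * a = a := by decide
    exact h (x i)
  mu := fun x => (∑ i, ((x i).val : ℝ)) / n
  mu_nonneg := fun a => by positivity
  mu_eq_zero_iff := fun a => by
    constructor
    · intro h
      rcases Nat.eq_zero_or_pos n with hn | hn
      · subst hn; exact funext fun i => i.elim0
      · have hne : ((n : ℝ)) ≠ 0 := by positivity
        have h2 : (∑ i, ((a i).val : ℝ)) = 0 := by
          rcases div_eq_zero_iff.mp h with h' | h'
          · exact h'
          · exact absurd h' hne
        have h3 := (Finset.sum_eq_zero_iff_of_nonneg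
          (fun i _ => by positivity : ∀ i ∈ Finset.univ, (0:ℝ) ≤ ((a i).val : ℝ))).mp h2
        funext i
        have h4 : ((a i).val : ℝ) = 0 := h3 i (Finset.mem_univ i)
        have h5 : (a i).val = 0 := by exact_mod_cast h4
        exact (ZMod.val_eq_zero _).mp h5
    · intro h; subst h; simp
  mu_add := fun a b hab => by
    have key : ∀ u v : ZMod 2, u * v = 0 → (u + v).val = u.val + v.val := by decide
    have h : ∀ i, (((a + b) i).val : ℝ) = ((a i).val : ℝ) + ((b i).val : ℝ) := by
      intro i
      have h0 : a i * b i = 0 := congrFun hab i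
      have h1 := key (a i) (b i) h0
      show (((a i + b i)).val : ℝ) = _
      rw [h1]
      push_cast
      ring
    show (∑ i, (((a + b) i).val : ℝ)) / n
        = (∑ i, ((a i).val : ℝ)) / n + (∑ i, ((b i).val : ℝ)) / n
    rw [← add_div, ← Finset.sum_add_distrib]
    congr 1
    exact Finset.sum_congr rfl fun i _ => h i

/-- A measure algebra is unital if it has an identity element of measure `1`. -/
def Unital (H : MeasureAlgebra) : Prop :=
  ∃ e : H.carrier, (∀ x, e * x = x) ∧ H.mu e = 1

/-- A measure algebra is locally standard if every finite subset is contained in a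
measure subalgebra scalar equivalent to a standard one. -/
def LocallyStandard (H : MeasureAlgebra) : Prop :=
  ∀ t : Finset H.carrier, ∃ (S : NonUnitalSubring H.carrier) (n : ℕ), 0 < n ∧
    (↑t : Set H.carrier) ⊆ S ∧ (H.restrict S).ScalarEquivalent (St n)

/-- For an (idempotent) element `h`, the subring `hH = {x | h·x = x}`. -/
def cornerSubring (H : MeasureAlgebra) (h : H.carrier) : NonUnitalSubring H.carrier where
  carrier := {x | h * x = x}
  zero_mem' := mul_zero h
  add_mem' := by
    intro a b ha hb
    simp only [Set.mem_setOf_eq] at *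
    rw [mul_add, ha, hb]
  neg_mem' := by
    intro a ha
    simp only [Set.mem_setOf_eq] at *
    rw [mul_neg, ha]
  mul_mem' := by
    intro a b ha hb
    simp only [Set.mem_setOf_eq] at *
    rw [← mul_assoc, ha]

/-- The unital measure algebra `H_h = (hH, μ(·)/μ(h))`. -/
def corner (H : MeasureAlgebra) (h : H.carrier) : MeasureAlgebra where
  carrier := H.cornerSubring h
  idem := fun x => Subtype.ext (H.idem x.1)
  mu := fun x => H.mu x.1 / H.mu h
  mu_nonneg := fun a => div_nonneg (H.mu_nonneg a.1) (H.mu_nonneg h)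
  mu_eq_zero_iff := fun a => by
    constructor
    · intro ha
      rcases div_eq_zero_iff.mp ha with h' | h'
      · exact Subtype.ext ((H.mu_eq_zero_iff a.1).mp h')
      · have hh : h = 0 := (H.mu_eq_zero_iff h).mp h'
        have h2 : h * (a : H.carrier) = a := a.2
        apply Subtype.ext
        show (a : H.carrier) = 0
        generalize hx : (a : H.carrier) = x at h2 ⊢
        rw [← h2, hh, zero_mul]
    · intro h'
      subst h'
      have h0 : H.mu ((0 : H.cornerSubring h) : H.carrier) = 0 :=
        (H.mu_eq_zero_iff _).mpr rfl
      show H.mu ((0 : H.cornerSubring h) : H.carrier) / H.mu h = 0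
      rw [h0, zero_div]
  mu_add := fun a b hab => by
    have : H.mu ((a : H.carrier) + b) = H.mu a + H.mu b :=
      H.mu_add a.1 b.1 (congrArg Subtype.val hab)
    show H.mu ((a + b : H.cornerSubring h) : H.carrier) / H.mu h = _
    rw [show ((a + b : H.cornerSubring h) : H.carrier) = (a : H.carrier) + b from rfl,
      this, add_div]

/-- `D(H)`: the set of `n` such that `H` has a subalgebra containing the identity of `H`
and isomorphic to the standard measure algebra `Stₙ`. -/
def D (H : MeasureAlgebra) : Set ℕ :=
  {n | ∃ S : NonUnitalSubring H.carrier,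
    (∃ e ∈ S, ∀ x : H.carrier, e * x = x) ∧ (H.restrict S).Isomorphic (St n)}

/-- The Steinitz number `st(H)` of a (unital locally standard) measure algebra:
the least common multiple of `D(H)`. -/
def st (H : MeasureAlgebra) : SteinitzNumber :=
  fun p => ⨆ n ∈ H.D, (n.factorization p : ℕ∞)

/-- The spectrum of a measure algebra: the set of Steinitz numbers `st(H_h)` for `h ≠ 0`. -/
def Spec (H : MeasureAlgebra) : Set SteinitzNumber :=
  {s | ∃ h : H.carrier, h ≠ 0 ∧ (H.corner h).st = s}

end MeasureAlgebra

/-! ### Concrete models: periodic sequences -/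

/-- A sequence `f : ℕ → 𝔽₂` is periodic with period `k`. -/
def Periodic2 (f : ℕ → ZMod 2) (k : ℕ) : Prop := ∀ i, f (i + k) = f i

theorem Periodic2.of_dvd {f : ℕ → ZMod 2} {k K : ℕ} (h : Periodic2 f k) (hdvd : k ∣ K) :
    Periodic2 f K := by
  obtain ⟨m, rfl⟩ := hdvd
  intro i
  induction m with
  | zero => rfl
  | succ m ih =>
      have he : i + k * (m + 1) = (i + k * m) + k := by ring
      rw [he, h (i + k * m), ih]

theorem SteinitzNumber.natDvd_lcm {k l : ℕ} {s : SteinitzNumber}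
    (hk : SteinitzNumber.NatDvd k s) (hl : SteinitzNumber.NatDvd l s) :
    SteinitzNumber.NatDvd (Nat.lcm k l) s := by
  refine ⟨Nat.lcm_pos hk.1 hl.1, fun p => ?_⟩
  rw [Nat.factorization_lcm hk.1.ne' hl.1.ne', Finsupp.sup_apply]
  rcases le_total ((Nat.factorization k) p) ((Nat.factorization l) p) with h | h
  · rw [sup_eq_right.mpr h]; exact hl.2 p
  · rw [sup_eq_left.mpr h]; exact hk.2 p

/-- The Boolean algebra `𝓗(s)` of `s`-periodic `0,1`-sequences, a concrete model of the
measure algebra `H(s) = ⊗ᵢ St_{pᵢ}` for `s = ∏ᵢ pᵢ`. -/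
def periodicSubring (s : SteinitzNumber) : NonUnitalSubring (ℕ → ZMod 2) where
  carrier := {f | ∃ k : ℕ, SteinitzNumber.NatDvd k s ∧ Periodic2 f k}
  zero_mem' := ⟨1, ⟨one_pos, fun p => by simp⟩, fun i => rfl⟩
  add_mem' := by
    rintro a b ⟨k, hk, hak⟩ ⟨l, hl, hbl⟩
    refine ⟨Nat.lcm k l, SteinitzNumber.natDvd_lcm hk hl, fun i => ?_⟩
    have ha := (hak.of_dvd (Nat.dvd_lcm_left k l)) i
    have hb := (hbl.of_dvd (Nat.dvd_lcm_right k l)) i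
    simp [Pi.add_apply, ha, hb]
  neg_mem' := by
    rintro a ⟨k, hk, hak⟩
    exact ⟨k, hk, fun i => by simp [Pi.neg_apply, hak i]⟩
  mul_mem' := by
    rintro a b ⟨k, hk, hak⟩ ⟨l, hl, hbl⟩
    refine ⟨Nat.lcm k l, SteinitzNumber.natDvd_lcm hk hl, fun i => ?_⟩
    have ha := (hak.of_dvd (Nat.dvd_lcm_left k l)) i
    have hb := (hbl.of_dvd (Nat.dvd_lcm_right k l)) i
    simp [Pi.mul_apply, ha, hb]

theorem exists_pos_period_of_mem {s : SteinitzNumber} {f : ℕ → ZMod 2}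
    (hf : f ∈ periodicSubring s) : ∃ k, 0 < k ∧ Periodic2 f k := by
  obtain ⟨k, hk, hp⟩ := hf
  exact ⟨k, hk.1, hp⟩

open Classical in
/-- The minimal period of a periodic `0,1`-sequence (junk value `1` otherwise). -/
def minPeriod (f : ℕ → ZMod 2) : ℕ :=
  if h : ∃ k, 0 < k ∧ Periodic2 f k then Nat.find h else 1

theorem minPeriod_spec {f : ℕ → ZMod 2} (hf : ∃ k, 0 < k ∧ Periodic2 f k) :
    0 < minPeriod f ∧ Periodic2 f (minPeriod f) := by
  classical
  unfold minPeriod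
  rw [dif_pos hf]
  exact Nat.find_spec hf

/-- The density of `1`s in a periodic `0,1`-sequence: the number of ones in a minimal
period, divided by the length of the period. -/
def density (f : ℕ → ZMod 2) : ℝ :=
  (((Finset.range (minPeriod f)).filter fun i => f i ≠ 0).card : ℝ) / (minPeriod f : ℝ)

theorem density_nonneg (f : ℕ → ZMod 2) : 0 ≤ density f := by
  unfold density; positivity

theorem count_mul_period {f : ℕ → ZMod 2} {k : ℕ} (h : Periodic2 f k) (m : ℕ) :
    ((Finset.range (k * m)).filter fun i => f i ≠ 0).card
      = m * ((Finset.range k).filter fun i => f i ≠ 0).card := by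
  induction m with
  | zero => simp
  | succ m ih =>
      have hmul : k * (m + 1) = k * m + k := by ring
      rw [hmul]
      classical
      rw [Finset.card_filter, Finset.sum_range_add, ← Finset.card_filter, ih]
      have hper : ∀ x, f (k * m + x) = f x := by
        intro x
        have := (h.of_dvd ⟨m, rfl⟩) x
        rw [← this, Nat.add_comm]
      have heq : (∑ x ∈ Finset.range k, if f (k * m + x) ≠ 0 then 1 else 0)
          = ((Finset.range k).filter fun i => f i ≠ 0).card := by
        rw [Finset.card_filter]
        exact Finset.sum_congr rfl fun x _ => by rw [hper x]
      rw [heq]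
      ring

theorem density_eq_div {f : ℕ → ZMod 2} (hf : ∃ k, 0 < k ∧ Periodic2 f k) (m : ℕ) (hm : 0 < m) :
    density f = (((Finset.range (minPeriod f * m)).filter fun i => f i ≠ 0).card : ℝ)
      / ((minPeriod f * m : ℕ) : ℝ) := by
  obtain ⟨hk0, hper⟩ := minPeriod_spec hf
  rw [count_mul_period hper m]
  unfold density
  push_cast
  rw [div_eq_div_iff (by positivity) (by positivity)]
  ring

theorem density_zero : density 0 = 0 := by
  unfold density
  simp

theorem density_eq_zero_iff {f : ℕ → ZMod 2} (hf : ∃ k, 0 < k ∧ Periodic2 f k) :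
    density f = 0 ↔ f = 0 := by
  obtain ⟨hk0, hper⟩ := minPeriod_spec hf
  constructor
  · intro h
    have hcard : (((Finset.range (minPeriod f)).filter fun i => f i ≠ 0).card : ℝ) = 0 := by
      unfold density at h
      rcases div_eq_zero_iff.mp h with h' | h'
      · exact h'
      · exact absurd h' (by positivity)
    have hcard' : ((Finset.range (minPeriod f)).filter fun i => f i ≠ 0).card = 0 := by
      exact_mod_cast hcard
    have hzero : ∀ i < minPeriod f, f i = 0 := by
      intro i hi
      by_contra hne
      have hmem : i ∈ (Finset.range (minPeriod f)).filter fun i => f i ≠ 0 :=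
        Finset.mem_filter.mpr ⟨Finset.mem_range.mpr hi, hne⟩
      have := Finset.card_pos.mpr ⟨i, hmem⟩
      omega
    funext n
    have h1 : f n = f (n % minPeriod f) := by
      conv_lhs => rw [show n = n % minPeriod f + minPeriod f * (n / minPeriod f) by
        rw [Nat.mod_add_div]]
      exact (hper.of_dvd ⟨n / minPeriod f, rfl⟩) (n % minPeriod f)
    rw [h1]
    exact hzero _ (Nat.mod_lt n hk0)
  · intro h
    subst h
    exact density_zero

theorem density_add {f g : ℕ → ZMod 2}
    (hf : ∃ k, 0 < k ∧ Periodic2 f k) (hg : ∃ k, 0 < k ∧ Periodic2 g k)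
    (hfg : f * g = 0) : density (f + g) = density f + density g := by
  classical
  obtain ⟨hf0, hfp⟩ := minPeriod_spec hf
  obtain ⟨hg0, hgp⟩ := minPeriod_spec hg
  have hs : ∃ k, 0 < k ∧ Periodic2 (f + g) k := by
    refine ⟨minPeriod f * minPeriod g, Nat.mul_pos hf0 hg0, fun i => ?_⟩
    have h1 := (hfp.of_dvd ⟨minPeriod g, rfl⟩) i
    have h2 := (hgp.of_dvd ⟨minPeriod f, mul_comm _ _⟩) i
    simp [Pi.add_apply, h1, h2]
  obtain ⟨hs0, hsp⟩ := minPeriod_spec hs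
  set kf := minPeriod f
  set kg := minPeriod g
  set ks := minPeriod (f + g)
  set K := kf * (kg * ks) with hK
  have hKf : density f = ((((Finset.range K).filter fun i => f i ≠ 0).card : ℝ)) / (K : ℝ) :=
    density_eq_div hf (kg * ks) (Nat.mul_pos hg0 hs0)
  have hKg : density g = ((((Finset.range K).filter fun i => g i ≠ 0).card : ℝ)) / (K : ℝ) := by
    have h := density_eq_div hg (kf * ks) (Nat.mul_pos hf0 hs0)
    rw [h]
    congr 2 <;> rw [show kg * (kf * ks) = kf * (kg * ks) by ring]
  have hKs : density (f + g)
      = ((((Finset.range K).filter fun i => (f + g) i ≠ 0).card : ℝ)) / (K : ℝ) := by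
    have h := density_eq_div hs (kf * kg) (Nat.mul_pos hf0 hg0)
    rw [h]
    congr 2 <;> rw [show ks * (kf * kg) = kf * (kg * ks) by ring]
  rw [hKf, hKg, hKs, ← add_div]
  congr 1
  rw [Finset.card_filter, Finset.card_filter, Finset.card_filter]
  push_cast
  rw [← Finset.sum_add_distrib]
  apply Finset.sum_congr rfl
  intro i _
  have h0 : f i * g i = 0 := congrFun hfg i
  have key : ∀ u v : ZMod 2, u * v = 0 →
      ((if u + v ≠ 0 then (1:ℕ) else 0)) = (if u ≠ 0 then 1 else 0) + (if v ≠ 0 then 1 else 0) := by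
    decide
  have hkey := key (f i) (g i) h0
  have hfg' : (f + g) i = f i + g i := rfl
  rw [hfg']
  exact_mod_cast hkey

/-- A concrete model of the measure algebra `Stₘ ⊗ H(t)`: `m`-tuples of `t`-periodic
`0,1`-sequences, with `μ(f₁, …, fₘ) = (density f₁ + ⋯ + density fₘ)/m`. -/
def StTensorH (m : ℕ) (t : SteinitzNumber) : MeasureAlgebra where
  carrier := Fin m → ↥(periodicSubring t)
  idem := fun x => funext fun j => Subtype.ext (funext fun i => by
    have h : ∀ a : ZMod 2, a * a = a := by decide
    exact h ((x j).1 i))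
  mu := fun F => (∑ j, density (F j).1) / m
  mu_nonneg := fun F => by
    have h : ∀ j ∈ Finset.univ, 0 ≤ density ((F j).1) := fun j _ => density_nonneg _
    exact div_nonneg (Finset.sum_nonneg h) (Nat.cast_nonneg m)
  mu_eq_zero_iff := fun F => by
    constructor
    · intro h
      rcases Nat.eq_zero_or_pos m with hm | hm
      · subst hm; exact funext fun j => j.elim0
      · have hsum : (∑ j, density (F j).1) = 0 := by
          rcases div_eq_zero_iff.mp h with h' | h'
          · exact h'
          · exact absurd h' (by positivity)
        have hall := (Finset.sum_eq_zero_iff_of_nonneg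
          (fun j _ => density_nonneg ((F j).1))).mp hsum
        funext j
        have hd : density (F j).1 = 0 := hall j (Finset.mem_univ j)
        have hz : (F j).1 = 0 :=
          (density_eq_zero_iff (exists_pos_period_of_mem (F j).2)).mp hd
        exact Subtype.ext hz
    · intro h
      subst h
      show (∑ j : Fin m, density (((0 : Fin m → ↥(periodicSubring t)) j)).1) / m = 0
      have hz : ∀ j ∈ Finset.univ,
          density (((0 : Fin m → ↥(periodicSubring t)) j)).1 = (fun _ : Fin m => (0:ℝ)) j :=
        fun j _ => density_zero
      rw [Finset.sum_congr rfl hz]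
      simp
  mu_add := fun F G hFG => by
    have hrow : ∀ j, density ((F j).1 + (G j).1) = density (F j).1 + density (G j).1 := by
      intro j
      have h0 : (F j).1 * (G j).1 = 0 := congrArg Subtype.val (congrFun hFG j)
      exact density_add (exists_pos_period_of_mem (F j).2)
        (exists_pos_period_of_mem (G j).2) h0
    show (∑ j, density (((F + G) j)).1) / m
        = (∑ j, density ((F j)).1) / m + (∑ j, density ((G j)).1) / m
    rw [← add_div, ← Finset.sum_add_distrib]
    congr 1
    exact Finset.sum_congr rfl fun j _ => hrow j

/-- The Boolean algebra underlying the concrete model of `H(∞) ⊗ H(s)`: families,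
indexed by `ℕ`, of `s`-periodic `0,1`-sequences, with finite support. -/
def finRowsSubring (s : SteinitzNumber) : NonUnitalSubring (ℕ → ℕ → ZMod 2) where
  carrier := {F | (Function.support F).Finite ∧ ∀ i, F i ∈ periodicSubring s}
  zero_mem' := ⟨by simp, fun i => (periodicSubring s).zero_mem⟩
  add_mem' := by
    rintro a b ⟨hfa, ha⟩ ⟨hfb, hb⟩
    refine ⟨(hfa.union hfb).subset (Function.support_add _ _), fun i => ?_⟩
    exact (periodicSubring s).add_mem (ha i) (hb i)
  neg_mem' := by
    rintro a ⟨hfa, ha⟩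
    exact ⟨by simpa using hfa, fun i => (periodicSubring s).neg_mem (ha i)⟩
  mul_mem' := by
    rintro a b ⟨hfa, ha⟩ ⟨hfb, hb⟩
    refine ⟨hfa.subset fun i hi => ?_, fun i => (periodicSubring s).mul_mem (ha i) (hb i)⟩
    simp only [Function.mem_support] at hi ⊢
    intro h0
    exact hi (by show a i * b i = 0; rw [h0, zero_mul])

/-- A concrete model of the measure algebra `H(∞) ⊗ H(s)`, where `H(∞)` is the measure
algebra of finite subsets of a countable set: finitely supported families of `s`-periodic
`0,1`-sequences, with `μ(F) = ∑ᶠ i, density (F i)`. -/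
def HInfTensorHs (s : SteinitzNumber) : MeasureAlgebra where
  carrier := ↥(finRowsSubring s)
  idem := fun x => Subtype.ext (funext fun i => funext fun j => by
    have h : ∀ a : ZMod 2, a * a = a := by decide
    exact h (x.1 i j))
  mu := fun F => ∑ᶠ i, density (F.1 i)
  mu_nonneg := fun F => finsum_nonneg fun i => density_nonneg _
  mu_eq_zero_iff := fun F => by
    have hsupp : Function.support (fun i => density (F.1 i)) ⊆ F.2.1.toFinset := by
      intro i hi
      simp only [Function.mem_support] at hi
      simp only [Set.Finite.coe_toFinset, Function.mem_support]
      intro h0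
      exact hi (by rw [h0]; exact density_zero)
    show (∑ᶠ i, density (F.1 i)) = 0 ↔ F = 0
    rw [finsum_eq_sum_of_support_subset _ hsupp]
    constructor
    · intro h
      have hall := (Finset.sum_eq_zero_iff_of_nonneg
        (fun i _ => density_nonneg (F.1 i))).mp h
      apply Subtype.ext
      funext i
      by_cases hi : i ∈ F.2.1.toFinset
      · have hd := hall i hi
        exact (density_eq_zero_iff (exists_pos_period_of_mem (F.2.2 i))).mp hd
      · simp only [Set.Finite.mem_toFinset, Function.mem_support, not_not] at hi
        rw [hi]
        rfl
    · intro h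
      apply Finset.sum_eq_zero
      intro i _
      have h0 : F.1 i = 0 := by rw [h]; rfl
      rw [h0]
      exact density_zero
  mu_add := fun F G hFG => by
    have hfin : ∀ (X : ↥(finRowsSubring s)),
        (Function.support fun i => density (X.1 i)).Finite := by
      intro X
      apply X.2.1.subset
      intro i hi
      simp only [Function.mem_support] at hi ⊢
      intro h0
      exact hi (by rw [h0]; exact density_zero)
    have hrow : ∀ i, density ((F + G).1 i) = density (F.1 i) + density (G.1 i) := by
      intro i
      have h0 : F.1 i * G.1 i = 0 := congrFun (congrArg Subtype.val hFG) i
      exact density_add (exists_pos_period_of_mem (F.2.2 i))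
        (exists_pos_period_of_mem (G.2.2 i)) h0
    show (∑ᶠ i, density ((F + G).1 i)) = _
    rw [finsum_congr hrow]
    exact finsum_add_distrib (hfin F) (hfin G)

section AuxPeriod

theorem zmod2_ne_zero_iff : ∀ v : ZMod 2, v ≠ 0 ↔ v = 1 := by decide

theorem Periodic2.mod {f : ℕ → ZMod 2} {B : ℕ} (h : Periodic2 f B) (j : ℕ) :
    f j = f (j % B) := by
  conv_lhs => rw [show j = j % B + B * (j / B) from (Nat.mod_add_div j B).symm]
  exact (h.of_dvd ⟨j / B, rfl⟩) (j % B)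

theorem Periodic2.mod_period {f : ℕ → ZMod 2} {k K : ℕ} (hk : Periodic2 f k)
    (hK : Periodic2 f K) : Periodic2 f (K % k) := by
  intro i
  have h1 : f (i + K % k + k * (K / k)) = f (i + K % k) :=
    (hk.of_dvd ⟨K / k, rfl⟩) (i + K % k)
  have h2 : i + K % k + k * (K / k) = i + K := by
    rw [add_assoc]; congr 1; exact Nat.mod_add_div K k
  rw [h2] at h1
  rw [← h1, hK i]

theorem periodic2_gcd {f : ℕ → ZMod 2} :
    ∀ k, 0 < k → ∀ K, Periodic2 f k → Periodic2 f K → Periodic2 f (Nat.gcd k K) := by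
  intro k
  induction k using Nat.strong_induction_on with
  | _ k ih =>
    intro hk K hfk hfK
    rw [Nat.gcd_rec]
    rcases Nat.eq_zero_or_pos (K % k) with h0 | hpos
    · rw [h0, Nat.gcd_zero_left]; exact hfk
    · exact ih (K % k) (Nat.mod_lt K hk) hpos k (hfk.mod_period hfK) hfk

theorem minPeriod_le {f : ℕ → ZMod 2} {K : ℕ} (h0 : 0 < K) (hK : Periodic2 f K) :
    minPeriod f ≤ K := by
  classical
  unfold minPeriod
  rw [dif_pos ⟨K, h0, hK⟩]
  exact Nat.find_min' _ ⟨h0, hK⟩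

theorem minPeriod_dvd {f : ℕ → ZMod 2} {K : ℕ} (h0 : 0 < K) (hK : Periodic2 f K) :
    minPeriod f ∣ K := by
  have hf : ∃ k, 0 < k ∧ Periodic2 f k := ⟨K, h0, hK⟩
  obtain ⟨hp0, hper⟩ := minPeriod_spec hf
  have hgpos : 0 < Nat.gcd (minPeriod f) K := Nat.gcd_pos_of_pos_left K hp0
  have hgper : Periodic2 f (Nat.gcd (minPeriod f) K) :=
    periodic2_gcd (minPeriod f) hp0 K hper hK
  have hle : minPeriod f ≤ Nat.gcd (minPeriod f) K := minPeriod_le hgpos hgper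
  have hge : Nat.gcd (minPeriod f) K ≤ minPeriod f :=
    Nat.le_of_dvd hp0 (Nat.gcd_dvd_left _ _)
  have : Nat.gcd (minPeriod f) K = minPeriod f := le_antisymm hge hle
  rw [← this]
  exact Nat.gcd_dvd_right _ _

/-- The number of ones of `f` in a window of length `B`. -/
def rowCount (f : ℕ → ZMod 2) (B : ℕ) : ℕ :=
  ((Finset.range B).filter fun j => f j ≠ 0).card

theorem density_eq_count_div {f : ℕ → ZMod 2} {K : ℕ} (h0 : 0 < K) (hK : Periodic2 f K) :
    density f = (rowCount f K : ℝ) / K := by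
  have hf : ∃ k, 0 < k ∧ Periodic2 f k := ⟨K, h0, hK⟩
  obtain ⟨m, hm⟩ := minPeriod_dvd h0 hK
  have hp0 := (minPeriod_spec hf).1
  have hm0 : 0 < m := by
    rcases Nat.eq_zero_or_pos m with h | h
    · subst h; omega
    · exact h
  rw [density_eq_div hf m hm0, ← hm]
  rfl

theorem rowCount_mul {f : ℕ → ZMod 2} {B : ℕ} (h : Periodic2 f B) (m : ℕ) :
    rowCount f (B * m) = m * rowCount f B :=
  count_mul_period h m

theorem eq_zero_of_rowCount_eq_zero {f : ℕ → ZMod 2} {K : ℕ} (h0 : 0 < K)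
    (hK : Periodic2 f K) (h : rowCount f K = 0) : f = 0 := by
  have hf : ∃ k, 0 < k ∧ Periodic2 f k := ⟨K, h0, hK⟩
  apply (density_eq_zero_iff hf).mp
  rw [density_eq_count_div h0 hK, h]
  simp

end AuxPeriod

section AuxNatDvd
open SteinitzNumber

theorem natDvd_one (s : SteinitzNumber) : SteinitzNumber.NatDvd 1 s :=
  ⟨one_pos, fun p => by simp⟩

theorem natDvd_pos {b : ℕ} {s : SteinitzNumber} (h : SteinitzNumber.NatDvd b s) : 0 < b := h.1

theorem natDvd_finsetLcm {s : SteinitzNumber} {ι : Type*} (T : Finset ι) (k : ι → ℕ)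
    (h : ∀ i ∈ T, SteinitzNumber.NatDvd (k i) s) :
    SteinitzNumber.NatDvd (T.lcm k) s := by
  classical
  induction T using Finset.induction_on with
  | empty => simpa using natDvd_one s
  | insert a T' hx ih =>
      rw [Finset.lcm_insert]
      have h1 : SteinitzNumber.NatDvd (k a) s := h a (Finset.mem_insert_self a T')
      have h2 : SteinitzNumber.NatDvd (T'.lcm k) s :=
        ih fun i hi => h i (Finset.mem_insert_of_mem hi)
      have : lcm (k a) (T'.lcm k) = Nat.lcm (k a) (T'.lcm k) := rfl
      rw [this]
      exact SteinitzNumber.natDvd_lcm h1 h2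

end AuxNatDvd

section AuxMu
open SteinitzNumber

variable {s : SteinitzNumber}

/-- Total number of ones of a family `F` over rows in `T` in a window of length `B`. -/
def onesCount (F : ℕ → ℕ → ZMod 2) (T : Finset ℕ) (B : ℕ) : ℕ :=
  ∑ i ∈ T, rowCount (F i) B

theorem mu_eq (F : (HInfTensorHs s).carrier) (T : Finset ℕ)
    (hT : ∀ i, i ∉ T → F.1 i = 0) {B : ℕ} (hB : 0 < B)
    (hper : ∀ i, Periodic2 (F.1 i) B) :
    (HInfTensorHs s).mu F = (onesCount F.1 T B : ℝ) / B := by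
  have hsupp : Function.support (fun i => density (F.1 i)) ⊆ ↑T := by
    intro i hi
    simp only [Function.mem_support] at hi
    by_contra hiT
    exact hi (by rw [hT i hiT]; exact density_zero)
  show (∑ᶠ i, density (F.1 i)) = _
  rw [finsum_eq_sum_of_support_subset _ hsupp]
  unfold onesCount
  push_cast
  rw [Finset.sum_div]
  exact Finset.sum_congr rfl fun i _ => density_eq_count_div hB (hper i)

theorem row_eq_zero_of_not_mem_toFinset (F : (HInfTensorHs s).carrier) {i : ℕ}
    (hi : i ∉ F.2.1.toFinset) : F.1 i = 0 := by
  simp only [Set.Finite.mem_toFinset, Function.mem_support, not_not] at hi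
  exact hi

theorem onesCount_pos (F : (HInfTensorHs s).carrier) (hF : F ≠ 0) {B : ℕ} (hB : 0 < B)
    (hper : ∀ i, Periodic2 (F.1 i) B) :
    0 < onesCount F.1 F.2.1.toFinset B := by
  have hFne : F.1 ≠ 0 := fun h => hF (Subtype.ext h)
  obtain ⟨i, hi⟩ : ∃ i, F.1 i ≠ 0 := by
    by_contra h
    push_neg at h
    exact hFne (funext h)
  have hiT : i ∈ F.2.1.toFinset := by
    simp only [Set.Finite.mem_toFinset, Function.mem_support]
    exact hi
  have hrc : 0 < rowCount (F.1 i) B := by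
    rcases Nat.eq_zero_or_pos (rowCount (F.1 i) B) with h | h
    · exact absurd (eq_zero_of_rowCount_eq_zero hB (hper i) h) hi
    · exact h
  calc 0 < rowCount (F.1 i) B := hrc
    _ ≤ onesCount F.1 F.2.1.toFinset B :=
      Finset.single_le_sum (f := fun j => rowCount (F.1 j) B)
        (fun j _ => Nat.zero_le _) hiT

/-- Every element of the model has a common period for all its rows which is a multiple
of any prescribed divisor `b` of `s`. -/
theorem exists_common_period (F : (HInfTensorHs s).carrier) {b : ℕ}
    (hb : SteinitzNumber.NatDvd b s) :
    ∃ m : ℕ, 0 < m ∧ SteinitzNumber.NatDvd (b * m) s ∧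
      ∀ i, Periodic2 (F.1 i) (b * m) := by
  classical
  set T := F.2.1.toFinset with hT
  have hmem : ∀ i, ∃ k, SteinitzNumber.NatDvd k s ∧ Periodic2 (F.1 i) k := fun i => F.2.2 i
  choose k hk hkper using hmem
  set B := Nat.lcm b (T.lcm k) with hB
  have hlcmdvd : SteinitzNumber.NatDvd (T.lcm k) s :=
    natDvd_finsetLcm T k fun i _ => hk i
  have hBdvd : SteinitzNumber.NatDvd B s := SteinitzNumber.natDvd_lcm hb hlcmdvd
  have hbB : b ∣ B := Nat.dvd_lcm_left _ _
  obtain ⟨m, hm⟩ := hbB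
  have hBpos : 0 < B := hBdvd.1
  have hm0 : 0 < m := by
    rcases Nat.eq_zero_or_pos m with h | h
    · rw [h, Nat.mul_zero] at hm; omega
    · exact h
  refine ⟨m, hm0, by rw [← hm]; exact hBdvd, fun i => ?_⟩
  rw [← hm]
  by_cases hiT : i ∈ T
  · exact (hkper i).of_dvd (dvd_trans (Finset.dvd_lcm hiT) (Nat.dvd_lcm_right b _))
  · have h0 : F.1 i = 0 := row_eq_zero_of_not_mem_toFinset F hiT
    rw [h0]
    intro j; rfl

end AuxMu

section Dchar
open SteinitzNumber MeasureAlgebra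

variable {s : SteinitzNumber}

theorem corner_identity_eq (h : (HInfTensorHs s).carrier)
    (e : ((HInfTensorHs s).corner h).carrier)
    (hid : ∀ x : ((HInfTensorHs s).corner h).carrier, e * x = x) : e.1 = h := by
  have hmem : h ∈ (HInfTensorHs s).cornerSubring h := (HInfTensorHs s).idem h
  have h1 : e * ⟨h, hmem⟩ = ⟨h, hmem⟩ := hid ⟨h, hmem⟩
  have h2 : e.1 * h = h := congrArg Subtype.val h1
  have h3 : h * e.1 = e.1 := e.2
  rw [← h3, mul_comm, h2]

theorem onesCount_mul (F : ℕ → ℕ → ZMod 2) (T : Finset ℕ) {b : ℕ} (m : ℕ)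
    (hper : ∀ i, Periodic2 (F i) b) :
    onesCount F T (b * m) = m * onesCount F T b := by
  unfold onesCount
  rw [Finset.mul_sum]
  exact Finset.sum_congr rfl fun i _ => rowCount_mul (hper i) m

theorem mem_D_forward (h : (HInfTensorHs s).carrier) (hne : h ≠ 0)
    {b : ℕ} (hb : SteinitzNumber.NatDvd b s) (hper : ∀ i, Periodic2 (h.1 i) b)
    {n : ℕ} (hn : n ∈ ((HInfTensorHs s).corner h).D) :
    0 < n ∧ ∃ m, 0 < m ∧ SteinitzNumber.NatDvd (b * m) s ∧
      n ∣ onesCount h.1 h.2.1.toFinset b * m := by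
  classical
  obtain ⟨S, ⟨e, heS, hid⟩, φ, hφ⟩ := hn
  have he1 : e.1 = h := corner_identity_eq h e hid
  have hμh : (HInfTensorHs s).mu h ≠ 0 := fun h0 => hne (((HInfTensorHs s).mu_eq_zero_iff h).mp h0)
  -- the identity has corner measure 1, so n ≠ 0
  have hμe : (((HInfTensorHs s).corner h).restrict S).mu ⟨e, heS⟩ = 1 := by
    show (HInfTensorHs s).mu e.1 / (HInfTensorHs s).mu h = 1
    rw [he1, div_self hμh]
  have hn0 : 0 < n := by
    rcases Nat.eq_zero_or_pos n with h0 | h0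
    · exfalso
      have := hφ ⟨e, heS⟩
      rw [hμe] at this
      subst h0
      have hz : (St 0).mu (φ ⟨e, heS⟩) = 0 := by
        show (∑ i : Fin 0, (((φ ⟨e, heS⟩) i).val : ℝ)) / (0:ℕ) = 0
        simp
      rw [hz] at this
      norm_num at this
    · exact h0
  refine ⟨hn0, ?_⟩
  -- the preimage of an atom of Stₙ
  set δ : (St n).carrier := fun j => if j = (⟨0, hn0⟩ : Fin n) then (1 : ZMod 2) else 0 with hδ
  have hμδ : (St n).mu δ = 1 / n := by
    show (∑ j, ((δ j).val : ℝ)) / n = 1 / n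
    congr 1
    have hval : ∀ j, ((δ j).val : ℝ) = if j = (⟨0, hn0⟩ : Fin n) then 1 else 0 := by
      intro j
      by_cases hj : j = (⟨0, hn0⟩ : Fin n) <;> simp [hδ, hj, ZMod.val_one]
    rw [Finset.sum_congr rfl fun j _ => hval j]
    simp
  have hx := hφ (φ.symm δ)
  rw [RingEquiv.apply_symm_apply, hμδ] at hx
  set G : (HInfTensorHs s).carrier := (φ.symm δ).1.1 with hG
  have hxG : (1 : ℝ) / n = (HInfTensorHs s).mu G / (HInfTensorHs s).mu h := hx
  -- common period
  obtain ⟨m, hm0, hdvd, hGper⟩ := exists_common_period G hb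
  have hbpos : 0 < b := hb.1
  have hBpos : 0 < b * m := Nat.mul_pos hbpos hm0
  have hhper : ∀ i, Periodic2 (h.1 i) (b * m) := fun i => (hper i).of_dvd ⟨m, rfl⟩
  set a := onesCount h.1 h.2.1.toFinset b with ha
  have hapos : 0 < a := onesCount_pos h hne hbpos hper
  set c := onesCount G.1 G.2.1.toFinset (b * m) with hc
  have hμG : (HInfTensorHs s).mu G = (c : ℝ) / (b * m : ℕ) :=
    mu_eq G _ (fun i hi => row_eq_zero_of_not_mem_toFinset G hi) hBpos hGper
  have hμh2 : (HInfTensorHs s).mu h = ((m * a : ℕ) : ℝ) / ((b * m : ℕ) : ℝ) := by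
    rw [mu_eq h _ (fun i hi => row_eq_zero_of_not_mem_toFinset h hi) hBpos hhper,
      onesCount_mul h.1 _ m hper]
  rw [hμG, hμh2] at hxG
  have hBne : ((b * m : ℕ) : ℝ) ≠ 0 := by positivity
  have hnne : (n : ℝ) ≠ 0 := by positivity
  have hmane : ((m * a : ℕ) : ℝ) ≠ 0 := by positivity
  have hkey : (c : ℝ) * n = (a : ℝ) * m := by
    field_simp at hxG
    push_cast at hxG
    linarith
  have hnat : c * n = a * m := by exact_mod_cast hkey
  exact ⟨m, hm0, hdvd, ⟨c, by rw [← hnat, mul_comm]⟩⟩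

end Dchar

section Dback
open SteinitzNumber MeasureAlgebra

variable {s : SteinitzNumber}

theorem zmod2_mul_ne_zero_iff : ∀ u v : ZMod 2, u * v ≠ 0 ↔ (u ≠ 0 ∧ v = 1) := by decide

theorem zmod2_mul_mul : ∀ u x y : ZMod 2, (u * x) * (u * y) = u * (x * y) := by decide

theorem zmod2_val_ite (u : ZMod 2) : (u.val : ℝ) = if u = 1 then 1 else 0 := by
  have h : u = 0 ∨ u = 1 := by revert u; decide
  rcases h with rfl | rfl
  · rw [if_neg (by decide : ¬ (0 : ZMod 2) = 1), ZMod.val_zero]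
    norm_num
  · rw [if_pos rfl, ZMod.val_one]
    norm_num

theorem mem_D_backward (h : (HInfTensorHs s).carrier) (hne : h ≠ 0)
    {b : ℕ} (hb : SteinitzNumber.NatDvd b s) (hper : ∀ i, Periodic2 (h.1 i) b)
    {n m : ℕ} (hn0 : 0 < n) (hm0 : 0 < m) (hdvd : SteinitzNumber.NatDvd (b * m) s)
    (hnd : n ∣ onesCount h.1 h.2.1.toFinset b * m) :
    n ∈ ((HInfTensorHs s).corner h).D := by
  classical
  set T := h.2.1.toFinset with hT
  set B := b * m with hB
  set a := onesCount h.1 T b with ha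
  have hbpos : 0 < b := hb.1
  have hBpos : 0 < B := Nat.mul_pos hbpos hm0
  have hapos : 0 < a := onesCount_pos h hne hbpos hper
  set N := a * m with hN
  have hNpos : 0 < N := Nat.mul_pos hapos hm0
  have hhperB : ∀ i, Periodic2 (h.1 i) B := fun i => (hper i).of_dvd ⟨m, rfl⟩
  set k := N / n with hk
  have hkN : N = n * k := (Nat.mul_div_cancel' hnd).symm
  have hk0 : 0 < k := by
    rcases Nat.eq_zero_or_pos k with h0 | h0
    · rw [h0, Nat.mul_zero] at hkN; omega
    · exact h0
  -- the set of one-positions of h within the window B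
  set P : Finset (ℕ × ℕ) :=
    (T ×ˢ Finset.range B).filter (fun q => h.1 q.1 q.2 ≠ 0) with hP
  have hPcard : P.card = N := by
    rw [hP, Finset.card_filter, Finset.sum_product]
    have hrow : ∀ i ∈ T, (∑ j ∈ Finset.range B, if h.1 i j ≠ 0 then 1 else 0)
        = rowCount (h.1 i) B := fun i _ => (Finset.card_filter _ _).symm
    rw [Finset.sum_congr rfl hrow]
    show onesCount h.1 T B = N
    rw [hB, onesCount_mul h.1 T m hper, hN, mul_comm]
  have hcongr : P.card = n * k := by rw [hPcard, hkN]
  set E : ↥P ≃ Fin n × Fin k :=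
    (P.equivFin.trans (finCongr hcongr)).trans finProdFinEquiv.symm with hE
  set blk : ℕ × ℕ → Fin n :=
    fun q => if hq : q ∈ P then (E ⟨q, hq⟩).1 else ⟨0, hn0⟩ with hblk
  have hblkP : ∀ (q : ℕ × ℕ) (hq : q ∈ P), blk q = (E ⟨q, hq⟩).1 := by
    intro q hq
    rw [hblk]
    exact dif_pos hq
  -- fibers of `blk` all have `k` elements
  have hfiber : ∀ c : Fin n → ZMod 2,
      (P.filter fun q => c (blk q) = 1).card
        = (Finset.univ.filter fun g => c g = 1).card * k := by
    intro c
    have hcard := Finset.card_bij'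
      (s := P.filter fun q => c (blk q) = 1)
      (t := (Finset.univ.filter fun g => c g = 1) ×ˢ (Finset.univ : Finset (Fin k)))
      (i := fun q hq => E ⟨q, (Finset.mem_filter.mp hq).1⟩)
      (j := fun x _ => ((E.symm x) : ℕ × ℕ))
      (hi := by
        intro q hq
        obtain ⟨hq1, hq2⟩ := Finset.mem_filter.mp hq
        refine Finset.mem_product.mpr ⟨Finset.mem_filter.mpr ⟨Finset.mem_univ _, ?_⟩,
          Finset.mem_univ _⟩
        rw [← hblkP q hq1]
        exact hq2)
      (hj := by
        intro x hx
        obtain ⟨hx1, _⟩ := Finset.mem_product.mp hx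
        have hmem : ((E.symm x) : ℕ × ℕ) ∈ P := (E.symm x).2
        refine Finset.mem_filter.mpr ⟨hmem, ?_⟩
        rw [hblkP _ hmem, Subtype.coe_eta, Equiv.apply_symm_apply]
        exact (Finset.mem_filter.mp hx1).2)
      (left_inv := by
        intro q hq
        simp only [Equiv.symm_apply_apply])
      (right_inv := by
        intro x hx
        simp only [Subtype.coe_eta, Equiv.apply_symm_apply])
    rw [hcard, Finset.card_product, Finset.card_univ, Fintype.card_fin]
  -- every fiber is nonempty
  have hblock : ∀ g : Fin n, ∃ q, q ∈ P ∧ blk q = g := by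
    intro g
    refine ⟨((E.symm (g, ⟨0, hk0⟩)) : ℕ × ℕ), (E.symm (g, ⟨0, hk0⟩)).2, ?_⟩
    rw [hblkP _ (E.symm (g, ⟨0, hk0⟩)).2, Subtype.coe_eta, Equiv.apply_symm_apply]
  -- the splitting map
  set ψ : (Fin n → ZMod 2) → ℕ → ℕ → ZMod 2 :=
    fun c i j => h.1 i j * c (blk (i, j % B)) with hψ
  have hψrow0 : ∀ c i, h.1 i = 0 → ψ c i = 0 := by
    intro c i h0
    funext j
    show h.1 i j * _ = 0
    rw [h0]
    show (0 : ZMod 2) * _ = 0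
    rw [zero_mul]
  have hψper : ∀ c i, Periodic2 (ψ c i) B := by
    intro c i j
    show h.1 i (j + B) * c (blk (i, (j + B) % B)) = h.1 i j * c (blk (i, j % B))
    rw [hhperB i j, Nat.add_mod_right]
  have hψmemFin : ∀ c, ψ c ∈ finRowsSubring s := by
    intro c
    constructor
    · apply h.2.1.subset
      intro i hi
      simp only [Function.mem_support] at hi ⊢
      intro h0
      exact hi (hψrow0 c i h0)
    · intro i
      exact ⟨B, hdvd, hψper c i⟩
  have hψcorner : ∀ c, (⟨ψ c, hψmemFin c⟩ : (HInfTensorHs s).carrier)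
      ∈ (HInfTensorHs s).cornerSubring h := by
    intro c
    apply Subtype.ext
    funext i j
    show h.1 i j * (h.1 i j * c (blk (i, j % B))) = h.1 i j * c (blk (i, j % B))
    rw [← mul_assoc, (by decide : ∀ u : ZMod 2, u * u = u) (h.1 i j)]
  set Ψ : (Fin n → ZMod 2) → ((HInfTensorHs s).corner h).carrier :=
    fun c => ⟨⟨ψ c, hψmemFin c⟩, hψcorner c⟩ with hΨ
  -- algebraic identities for Ψ
  have hΨadd : ∀ c c', Ψ (c + c') = Ψ c + Ψ c' := by
    intro c c'
    apply Subtype.ext; apply Subtype.ext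
    funext i j
    show h.1 i j * (c (blk (i, j % B)) + c' (blk (i, j % B))) = _ * _ + _ * _
    rw [mul_add]
  have hΨmul : ∀ c c', Ψ (c * c') = Ψ c * Ψ c' := by
    intro c c'
    apply Subtype.ext; apply Subtype.ext
    funext i j
    show h.1 i j * (c (blk (i, j % B)) * c' (blk (i, j % B))) = (_ * _) * (_ * _)
    rw [zmod2_mul_mul]
  have hΨzero : Ψ 0 = 0 := by
    apply Subtype.ext; apply Subtype.ext
    funext i j
    show h.1 i j * (0 : ZMod 2) = 0
    rw [mul_zero]
  have hΨneg : ∀ c, Ψ c = -Ψ c := by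
    intro c
    apply Subtype.ext; apply Subtype.ext
    funext i j
    show h.1 i j * c (blk (i, j % B)) = -(h.1 i j * c (blk (i, j % B)))
    rw [(by decide : ∀ u : ZMod 2, -u = u)]
  -- Ψ is injective
  have hΨinj : Function.Injective Ψ := by
    intro c c' hcc
    funext g
    obtain ⟨q, hqP, hqg⟩ := hblock g
    obtain ⟨hq1, hq2⟩ := Finset.mem_filter.mp hqP
    obtain ⟨_, hq2'⟩ := Finset.mem_product.mp hq1
    have hj : q.2 % B = q.2 := Nat.mod_eq_of_lt (Finset.mem_range.mp hq2')
    have hval : h.1 q.1 q.2 = 1 := (zmod2_ne_zero_iff _).mp hq2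
    have hcc' : ψ c q.1 q.2 = ψ c' q.1 q.2 :=
      congrFun (congrFun (congrArg (fun x => x.1.1) hcc) q.1) q.2
    rw [hψ] at hcc'
    simp only at hcc'
    rw [hj, Prod.mk.eta, hval, one_mul, one_mul, hqg] at hcc'
    exact hcc'
  -- the subalgebra
  set S : NonUnitalSubring ((HInfTensorHs s).corner h).carrier :=
    { carrier := Set.range Ψ
      zero_mem' := ⟨0, hΨzero⟩
      add_mem' := by rintro x y ⟨c, rfl⟩ ⟨c', rfl⟩; exact ⟨c + c', hΨadd c c'⟩
      neg_mem' := by rintro x ⟨c, rfl⟩; exact ⟨c, (hΨneg c).symm ▸ (hΨneg c)⟩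
      mul_mem' := by rintro x y ⟨c, rfl⟩ ⟨c', rfl⟩; exact ⟨c * c', hΨmul c c'⟩ } with hS
  have hmemS : ∀ x : ((HInfTensorHs s).corner h).carrier, x ∈ S ↔ ∃ c, Ψ c = x :=
    fun x => Iff.rfl
  -- the identity element
  have hhmem : h ∈ (HInfTensorHs s).cornerSubring h := (HInfTensorHs s).idem h
  have hone : Ψ (fun _ => 1) = ⟨h, hhmem⟩ := by
    apply Subtype.ext; apply Subtype.ext
    funext i j
    show h.1 i j * (1 : ZMod 2) = h.1 i j
    rw [mul_one]
  -- the measure computation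
  have hμh2 : (HInfTensorHs s).mu h = ((n * k : ℕ) : ℝ) / (B : ℝ) := by
    rw [mu_eq h T (fun i hi => row_eq_zero_of_not_mem_toFinset h hi) hBpos hhperB]
    congr 2
    calc onesCount h.1 T B = m * onesCount h.1 T b := by
          rw [hB]; exact onesCount_mul h.1 T m hper
      _ = N := by rw [hN, ha, mul_comm]
      _ = n * k := hkN
  have hcount : ∀ c : Fin n → ZMod 2,
      onesCount (ψ c) T B = (P.filter fun q => c (blk q) = 1).card := by
    intro c
    rw [hP, Finset.filter_filter, Finset.card_filter, Finset.sum_product]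
    unfold onesCount rowCount
    apply Finset.sum_congr rfl
    intro i _
    rw [Finset.card_filter]
    apply Finset.sum_congr rfl
    intro j hj
    have hjB : j % B = j := Nat.mod_eq_of_lt (Finset.mem_range.mp hj)
    have hiff : ψ c i j ≠ 0 ↔ (h.1 i j ≠ 0 ∧ c (blk (i, j)) = 1) := by
      simp only [hψ]
      rw [hjB]
      exact zmod2_mul_ne_zero_iff _ _
    simp only [hiff]
  have hμψ : ∀ c, (HInfTensorHs s).mu (⟨ψ c, hψmemFin c⟩ : (HInfTensorHs s).carrier)
      = (((Finset.univ.filter fun g => c g = 1).card * k : ℕ) : ℝ) / (B : ℝ) := by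
    intro c
    rw [mu_eq (⟨ψ c, hψmemFin c⟩ : (HInfTensorHs s).carrier) T
      (fun i hi => hψrow0 c i (row_eq_zero_of_not_mem_toFinset h hi)) hBpos (hψper c)]
    congr 2
    rw [hcount c, hfiber c]
  -- the equivalence with Stₙ
  set Efun : (Fin n → ZMod 2) ≃ ↥S :=
    { toFun := fun c => ⟨Ψ c, ⟨c, rfl⟩⟩
      invFun := fun x => Classical.choose ((hmemS x.1).mp x.2)
      left_inv := by
        intro c
        apply hΨinj
        exact Classical.choose_spec ((hmemS (Ψ c)).mp ⟨c, rfl⟩)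
      right_inv := by
        intro x
        exact Subtype.ext (Classical.choose_spec ((hmemS x.1).mp x.2)) } with hEfun
  set ringE : (Fin n → ZMod 2) ≃+* ↥S :=
    { Efun with
      map_add' := fun c c' => Subtype.ext (hΨadd c c')
      map_mul' := fun c c' => Subtype.ext (hΨmul c c') } with hringE
  refine ⟨S, ⟨⟨h, hhmem⟩, (hmemS _).mpr ⟨fun _ => 1, hone⟩,
    fun x => Subtype.ext x.2⟩, ringE.symm, ?_⟩
  intro x
  obtain ⟨c, hc⟩ := (hmemS x.1).mp x.2
  have hx : x = Efun c := Subtype.ext hc.symm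
  rw [hx]
  show (St n).mu (ringE.symm (ringE c)) = _
  rw [RingEquiv.symm_apply_apply]
  show (St n).mu c
      = (HInfTensorHs s).mu (⟨ψ c, hψmemFin c⟩ : (HInfTensorHs s).carrier)
        / (HInfTensorHs s).mu h
  rw [hμψ c, hμh2]
  have hstn : (St n).mu c = ((Finset.univ.filter fun g => c g = 1).card : ℝ) / n := by
    show (∑ g, ((c g).val : ℝ)) / n = _
    congr 1
    rw [Finset.card_filter]
    push_cast
    exact Finset.sum_congr rfl fun g _ => zmod2_val_ite (c g)
  rw [hstn]
  have hBne : (B : ℝ) ≠ 0 := by positivity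
  have hkne : (k : ℝ) ≠ 0 := by positivity
  have hnne : (n : ℝ) ≠ 0 := by positivity
  push_cast
  rw [div_div_div_cancel_right₀ hBne, mul_div_mul_right _ _ hkne]

end Dback

section StCorner
open SteinitzNumber MeasureAlgebra

variable {s : SteinitzNumber}

theorem enat_eq_top_of_forall_le {x : ℕ∞} (h : ∀ j : ℕ, (j : ℕ∞) ≤ x) : x = ⊤ := by
  induction x using ENat.recTopCoe with
  | top => rfl
  | coe N =>
      have h2 : N + 1 ≤ N := by exact_mod_cast h (N + 1)
      omega

theorem st_corner (h : (HInfTensorHs s).carrier) (hne : h ≠ 0)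
    {b : ℕ} (hb : SteinitzNumber.NatDvd b s) (hper : ∀ i, Periodic2 (h.1 i) b) :
    ((HInfTensorHs s).corner h).st = fun p : Nat.Primes =>
      (((onesCount h.1 h.2.1.toFinset b).factorization p : ℕ∞))
        + (s p - (b.factorization p : ℕ∞)) := by
  classical
  funext p
  set a := onesCount h.1 h.2.1.toFinset b with ha
  have hapos : 0 < a := onesCount_pos h hne hb.1 hper
  show ⨆ n ∈ ((HInfTensorHs s).corner h).D, ((n.factorization p : ℕ∞)) = _
  -- the elements of the spectrum sup
  have hkey : ∀ j : ℕ, (b.factorization p : ℕ∞) + j ≤ s p →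
      ((a.factorization p : ℕ∞) + j
        ≤ ⨆ n ∈ ((HInfTensorHs s).corner h).D, ((n.factorization p : ℕ∞))) := by
    intro j hj
    have hppos : 0 < ((p : ℕ) ^ j) := pow_pos p.2.pos j
    have hdvd : SteinitzNumber.NatDvd (b * (p : ℕ) ^ j) s := by
      refine ⟨Nat.mul_pos hb.1 hppos, fun q => ?_⟩
      rw [Nat.factorization_mul hb.1.ne' hppos.ne', Finsupp.add_apply,
        p.2.factorization_pow, Finsupp.single_apply]
      by_cases hq : (p : ℕ) = (q : ℕ)
      · have hqp : q = p := Subtype.ext hq.symm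
        subst hqp
        rw [if_pos rfl]
        push_cast
        exact hj
      · rw [if_neg hq, add_zero]
        exact hb.2 q
    have hmem : (a * (p : ℕ) ^ j) ∈ ((HInfTensorHs s).corner h).D := by
      apply mem_D_backward h hne hb hper (Nat.mul_pos hapos hppos) hppos hdvd
      exact dvd_refl _
    have hfact : (((a * (p : ℕ) ^ j).factorization p : ℕ∞))
        = (a.factorization p : ℕ∞) + j := by
      rw [Nat.factorization_mul hapos.ne' hppos.ne', Finsupp.add_apply,
        p.2.factorization_pow, Finsupp.single_apply, if_pos rfl]
      push_cast
      rfl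
    rw [← hfact]
    exact le_iSup₂ (f := fun n (_ : n ∈ ((HInfTensorHs s).corner h).D) =>
      ((n.factorization p : ℕ∞))) (a * (p : ℕ) ^ j) hmem
  apply le_antisymm
  · apply iSup₂_le
    intro n hn
    obtain ⟨hn0, m, hm0, hdvd, hnmi⟩ := mem_D_forward h hne hb hper hn
    have hval : (n.factorization p : ℕ∞)
        ≤ (a.factorization p : ℕ∞) + (m.factorization p : ℕ∞) := by
      have h1 : n.factorization ≤ (a * m).factorization :=
        (Nat.factorization_le_iff_dvd hn0.ne' (Nat.mul_pos hapos hm0).ne').mpr hnmi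
      have h2 := h1 p
      rw [Nat.factorization_mul hapos.ne' hm0.ne', Finsupp.add_apply] at h2
      exact_mod_cast h2
    have hmle : (m.factorization p : ℕ∞) ≤ s p - (b.factorization p : ℕ∞) := by
      apply (ENat.addLECancellable_of_ne_top
        (ENat.coe_ne_top (b.factorization p))).le_tsub_of_add_le_left
      have h3 := hdvd.2 p
      rw [Nat.factorization_mul hb.1.ne' hm0.ne', Finsupp.add_apply] at h3
      exact_mod_cast h3
    calc (n.factorization p : ℕ∞)
        ≤ (a.factorization p : ℕ∞) + (m.factorization p : ℕ∞) := hval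
      _ ≤ (a.factorization p : ℕ∞) + (s p - (b.factorization p : ℕ∞)) :=
          add_le_add le_rfl hmle
  · cases hsp : s p using ENat.recTopCoe with
    | top =>
        have htop : (⨆ n ∈ ((HInfTensorHs s).corner h).D, ((n.factorization p : ℕ∞))) = ⊤ := by
          apply enat_eq_top_of_forall_le
          intro j
          calc (j : ℕ∞) ≤ (a.factorization p : ℕ∞) + j := le_add_self
            _ ≤ _ := hkey j (by rw [hsp]; exact le_top)
        rw [htop]
        exact le_top
    | coe S =>
        have hbS : b.factorization p ≤ S := by
          have := hb.2 p
          rw [hsp] at this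
          exact_mod_cast this
        set j := S - b.factorization p with hj
        have hj1 : (b.factorization p : ℕ∞) + j ≤ s p := by
          rw [hsp, hj]
          exact_mod_cast le_of_eq (Nat.add_sub_cancel' hbS)
        have hj2 : ((S : ℕ∞)) - (b.factorization p : ℕ∞) = (j : ℕ∞) := by
          rw [hj]
          exact (ENat.coe_sub S (b.factorization p)).symm
        rw [hj2]
        exact hkey j hj1
end StCorner


/-- For a Steinitz number `s`, `Spec(H(∞) ⊗ H(s)) = S(∞, s) = { (a/b)·s : a ∈ ℕ, b ∈ Ω(s) }`. -/
theorem spec_HInfTensorHs (s : SteinitzNumber) :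
    (HInfTensorHs s).Spec = SteinitzNumber.SInf s := by
  classical
  ext t
  constructor
  · rintro ⟨h, hne, rfl⟩
    obtain ⟨m, hm0, hdvd, hper⟩ := exists_common_period h (natDvd_one s)
    set b := 1 * m with hbdef
    refine ⟨onesCount h.1 h.2.1.toFinset b, b,
      onesCount_pos h hne hdvd.1 hper, hdvd, ?_⟩
    funext p
    show (b.factorization p : ℕ∞) + ((HInfTensorHs s).corner h).st p
        = ((onesCount h.1 h.2.1.toFinset b).factorization p : ℕ∞) + s p
    rw [congrFun (st_corner h hne hdvd hper) p]
    rw [← add_assoc, add_comm ((b.factorization p : ℕ∞)), add_assoc,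
      add_tsub_cancel_of_le (hdvd.2 p)]
  · rintro ⟨a, b, hapos, hb, heq⟩
    set F : ℕ → ℕ → ZMod 2 := fun i j => if i < a ∧ j % b = 0 then 1 else 0 with hF
    have hrow0 : ∀ i, ¬ i < a → F i = 0 := by
      intro i hia
      funext j
      show (if i < a ∧ j % b = 0 then (1 : ZMod 2) else 0) = 0
      rw [if_neg (fun hc => hia hc.1)]
    have hrow1 : ∀ i, i < a → F i 0 = 1 := by
      intro i hia
      show (if i < a ∧ 0 % b = 0 then (1 : ZMod 2) else 0) = 1
      rw [if_pos ⟨hia, Nat.zero_mod b⟩]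
    have hFmem : F ∈ finRowsSubring s := by
      constructor
      · apply Set.Finite.subset (Set.finite_Iio a)
        intro i hi
        simp only [Function.mem_support] at hi
        simp only [Set.mem_Iio]
        by_contra hia
        exact hi (hrow0 i hia)
      · intro i
        refine ⟨b, hb, fun j => ?_⟩
        show (if i < a ∧ (j + b) % b = 0 then (1 : ZMod 2) else 0) = _
        rw [Nat.add_mod_right]
    set h : (HInfTensorHs s).carrier := ⟨F, hFmem⟩ with hh
    have hne : h ≠ 0 := by
      intro h0
      have h1 : F 0 0 = 0 := congrFun (congrFun (congrArg Subtype.val h0) 0) 0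
      rw [hrow1 0 hapos] at h1
      exact one_ne_zero h1
    have hper : ∀ i, Periodic2 (h.1 i) b := by
      intro i j
      show (if i < a ∧ (j + b) % b = 0 then (1 : ZMod 2) else 0) = _
      rw [Nat.add_mod_right]
    have hT : h.2.1.toFinset = Finset.range a := by
      ext i
      simp only [Set.Finite.mem_toFinset, Function.mem_support, Finset.mem_range]
      constructor
      · intro hi
        by_contra hia
        exact hi (hrow0 i hia)
      · intro hia h0
        have := congrFun h0 0
        rw [show h.1 i 0 = F i 0 from rfl, hrow1 i hia] at this
        exact one_ne_zero this
    have hcount : onesCount h.1 h.2.1.toFinset b = a := by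
      rw [hT]
      unfold onesCount rowCount
      have hone : ∀ i ∈ Finset.range a,
          ((Finset.range b).filter fun j => h.1 i j ≠ 0).card = 1 := by
        intro i hia
        have hia' : i < a := Finset.mem_range.mp hia
        have hfe : ((Finset.range b).filter fun j => h.1 i j ≠ 0) = {0} := by
          ext j
          simp only [Finset.mem_filter, Finset.mem_range, Finset.mem_singleton]
          constructor
          · rintro ⟨hjb, hj0⟩
            by_contra hj
            apply hj0
            show (if i < a ∧ j % b = 0 then (1 : ZMod 2) else 0) = 0
            rw [if_neg]
            rintro ⟨-, hmod⟩
            rw [Nat.mod_eq_of_lt hjb] at hmod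
            exact hj hmod
          · rintro rfl
            refine ⟨hb.1, ?_⟩
            rw [show h.1 i 0 = F i 0 from rfl, hrow1 i hia']
            exact one_ne_zero
        rw [hfe, Finset.card_singleton]
      rw [Finset.sum_congr rfl hone, Finset.sum_const, smul_eq_mul, mul_one,
        Finset.card_range]
    refine ⟨h, hne, ?_⟩
    rw [st_corner h hne hb hper]
    funext p
    show ((onesCount h.1 h.2.1.toFinset b).factorization p : ℕ∞)
        + (s p - (b.factorization p : ℕ∞)) = t p
    rw [hcount]
    have h1 : (b.factorization p : ℕ∞) + t p
        = ((SteinitzNumber.ofNat a) p) + s p := congrFun heq p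
    have hble : (b.factorization p : ℕ∞) ≤ s p := hb.2 p
    have hc := ENat.addLECancellable_of_ne_top (ENat.coe_ne_top (b.factorization p))
    have h2 : t p = ((b.factorization p : ℕ∞) + t p) - (b.factorization p : ℕ∞) :=
      (hc.add_tsub_cancel_left).symm
    rw [h2, h1]
    show ((a.factorization p : ℕ∞)) + (s p - (b.factorization p : ℕ∞))
        = ((a.factorization p : ℕ∞) + s p) - (b.factorization p : ℕ∞)
    rw [hc.add_tsub_assoc_of_le hble]
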